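/- Let q ∈ ℕ, let s be an integer with 1 ≤ s ≤ q + 1, let C_P > 0, and let Z be a real Banach space. There exists a constant C > 0, depending only on q, s, and C_P, with the following property: for all real numbers a < b with τ = b − a, all r ∈ [1,∞], every linear operator P from C([a,b];Z) into the space of restrictions to [a,b] of Z-valued polynomials of degree at most q satisfying (i) Pp = p on [a,b] for every Z-valued polynomial p of degree at most q, and (ii) ‖Pg‖_{L^∞((a,b);Z)} ≤ C_P ‖g‖_{L^∞((a,b);Z)} for every g ∈ C([a,b];Z), and every s-times continuously differentiable function v : [a,b] → Z, one has ‖(v − Pv)'‖_{L^r((a,b);Z)} ≤ C τ^{s−1} ‖v^{(s)}‖_{L^r((a,b);Z)}, where (v − Pv)' denotes the derivative of v − Pv. -/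

import Mathlib

open MeasureTheory Set ENNReal

/-- A `Z`-valued polynomial of degree at most `q`:
`t ↦ ∑_{i=0}^{q} t^i • c i` with coefficients `c i ∈ Z`. -/
def IsPolyDegLE (Z : Type*) [AddCommGroup Z] [Module ℝ Z] (q : ℕ) (f : ℝ → Z) : Prop :=
  ∃ c : Fin (q + 1) → Z, ∀ t : ℝ, f t = ∑ i : Fin (q + 1), t ^ (i : ℕ) • c i


open intervalIntegral
set_option linter.unusedSectionVars false
set_option maxHeartbeats 1000000

section Helpers

variable {Z : Type*} [NormedAddCommGroup Z] [NormedSpace ℝ Z] {q : ℕ}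

lemma IsPolyDegLE.continuous {f : ℝ → Z} (hf : IsPolyDegLE Z q f) : Continuous f := by
  obtain ⟨c, hc⟩ := hf
  have : Continuous fun t : ℝ => ∑ i : Fin (q + 1), t ^ (i : ℕ) • c i :=
    continuous_finset_sum _ fun i _ => (continuous_pow (i : ℕ)).smul continuous_const
  exact this.congr fun t => (hc t).symm

lemma IsPolyDegLE.comp_affine {f : ℝ → Z} (hf : IsPolyDegLE Z q f) (α β : ℝ) :
    IsPolyDegLE Z q (fun t => f (α + β * t)) := by
  obtain ⟨c, hc⟩ := hf
  have key : ∀ (t : ℝ) (i : Fin (q + 1)), (α + β * t) ^ (i : ℕ) =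
      ∑ j : Fin (q + 1), ((i : ℕ).choose (j : ℕ) : ℝ) * α ^ ((i : ℕ) - (j : ℕ)) * β ^ (j : ℕ)
        * t ^ (j : ℕ) := by
    intro t i
    rw [Fin.sum_univ_eq_sum_range
      (fun j => ((i : ℕ).choose j : ℝ) * α ^ ((i : ℕ) - j) * β ^ j * t ^ j) (q + 1)]
    rw [← Finset.sum_subset (Finset.range_subset_range.2 (Nat.succ_le_succ i.is_le))
      (fun j _ hj => by
        have hij : (i : ℕ) < j := by
          by_contra h
          exact hj (Finset.mem_range.2 (Nat.lt_succ_of_le (not_lt.1 h)))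
        rw [Nat.choose_eq_zero_of_lt hij]
        simp)]
    rw [add_comm α (β * t), add_pow]
    refine Finset.sum_congr rfl fun j hj => ?_
    rw [mul_pow]
    ring
  refine ⟨fun j => ∑ i : Fin (q + 1),
    (((i : ℕ).choose (j : ℕ) : ℝ) * α ^ ((i : ℕ) - (j : ℕ)) * β ^ (j : ℕ)) • c i, fun t => ?_⟩
  calc (fun t => f (α + β * t)) t = ∑ i : Fin (q + 1), (α + β * t) ^ (i : ℕ) • c i := hc _
    _ = ∑ i : Fin (q + 1), ∑ j : Fin (q + 1),
        (((i : ℕ).choose (j : ℕ) : ℝ) * α ^ ((i : ℕ) - (j : ℕ)) * β ^ (j : ℕ) * t ^ (j : ℕ))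
          • c i := by
        refine Finset.sum_congr rfl fun i _ => ?_
        rw [key t i, Finset.sum_smul]
    _ = ∑ j : Fin (q + 1), t ^ (j : ℕ) • ∑ i : Fin (q + 1),
        (((i : ℕ).choose (j : ℕ) : ℝ) * α ^ ((i : ℕ) - (j : ℕ)) * β ^ (j : ℕ)) • c i := by
        rw [Finset.sum_comm]
        refine Finset.sum_congr rfl fun j _ => ?_
        rw [Finset.smul_sum]
        refine Finset.sum_congr rfl fun i _ => ?_
        rw [smul_smul]
        congr 1
        ring

/-- A function of the form `x ↦ ∑_{k ≤ n} ((k!)⁻¹ (x - x₀)^k) • z k` with `n ≤ q`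
is a polynomial of degree at most `q`. -/
lemma taylor_isPolyDegLE (v : ℝ → Z) (n : ℕ) (hn : n ≤ q) (s₀ : Set ℝ) (x₀ : ℝ) :
    IsPolyDegLE Z q (fun x => taylorWithinEval v n s₀ x₀ x) := by
  classical
  set z : ℕ → Z := fun k => iteratedDerivWithin k v s₀ x₀ with hz
  have hF : IsPolyDegLE Z q (fun y : ℝ => ∑ i : Fin (q + 1),
      y ^ (i : ℕ) • (if (i : ℕ) ≤ n then ((i : ℕ).factorial : ℝ)⁻¹ • z (i : ℕ) else 0)) :=
    ⟨_, fun _ => rfl⟩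
  have := hF.comp_affine (-x₀) 1
  have heq : (fun x => taylorWithinEval v n s₀ x₀ x) = fun x : ℝ => ∑ i : Fin (q + 1),
      (-x₀ + 1 * x) ^ (i : ℕ) • (if (i : ℕ) ≤ n then ((i : ℕ).factorial : ℝ)⁻¹ • z (i : ℕ) else 0) := by
    funext x
    rw [taylor_within_apply]
    have h1 : (-x₀ + 1 * x) = x - x₀ := by ring
    simp only [h1]
    rw [Fin.sum_univ_eq_sum_range
      (fun i => (x - x₀) ^ i • (if i ≤ n then ((i).factorial : ℝ)⁻¹ • z i else 0)) (q + 1)]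
    rw [← Finset.sum_subset (Finset.range_subset_range.2 (Nat.succ_le_succ hn))
      (fun j _ hj => by
        have : n < j := by
          by_contra h
          exact hj (Finset.mem_range.2 (Nat.lt_succ_of_le (not_lt.1 h)))
        rw [if_neg (not_le.2 this), smul_zero])]
    refine Finset.sum_congr rfl fun k hk => ?_
    rw [if_pos (Nat.lt_succ_iff.1 (Finset.mem_range.1 hk)), smul_smul]
    congr 1
    ring
  rw [heq]
  exact this



lemma taylor_continuous' (v : ℝ → Z) (n : ℕ) (s₀ : Set ℝ) (x₀ : ℝ) :
    Continuous (fun x => taylorWithinEval v n s₀ x₀ x) := by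
  have : Continuous fun x : ℝ => ∑ k ∈ Finset.range (n + 1),
      ((k.factorial : ℝ)⁻¹ * (x - x₀) ^ k) • iteratedDerivWithin k v s₀ x₀ := by
    refine continuous_finset_sum _ fun k _ => ?_
    exact (continuous_const.mul ((continuous_id.sub continuous_const).pow k)).smul continuous_const
  exact this.congr fun x => (taylor_within_apply v n s₀ x₀ x).symm

lemma taylor_hasDerivAt {a b : ℝ} (hab : a < b) (v : ℝ → Z) (m : ℕ) (t : ℝ) :
    HasDerivAt (fun x => taylorWithinEval v (m + 1) (Icc a b) a x)
      (taylorWithinEval (derivWithin v (Icc a b)) m (Icc a b) a t) t := by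
  have hfun : (fun x => taylorWithinEval v (m + 1) (Icc a b) a x)
      = fun x => ∑ k ∈ Finset.range (m + 2),
          ((k.factorial : ℝ)⁻¹ * (x - a) ^ k) • iteratedDerivWithin k v (Icc a b) a :=
    funext fun x => taylor_within_apply v (m + 1) (Icc a b) a x
  rw [hfun]
  have h := HasDerivAt.fun_sum (u := Finset.range (m + 2))
    (A := fun k y => ((k.factorial : ℝ)⁻¹ * (y - a) ^ k) • iteratedDerivWithin k v (Icc a b) a)
    (A' := fun k => ((k.factorial : ℝ)⁻¹ * ((k : ℝ) * (t - a) ^ (k - 1) * 1))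
        • iteratedDerivWithin k v (Icc a b) a)
    (fun k _ => ((((hasDerivAt_id t).sub_const a).pow k).const_mul
      ((k.factorial : ℝ)⁻¹)).smul_const _)
  convert h using 1
  rw [Finset.sum_range_succ']
  simp only [Nat.cast_zero, zero_mul, mul_zero, zero_smul, add_zero, Nat.factorial_zero,
    zero_mul, mul_one]
  rw [taylor_within_apply]
  refine Finset.sum_congr rfl fun k hk => ?_
  have hz : iteratedDerivWithin k (derivWithin v (Icc a b)) (Icc a b) a
      = iteratedDerivWithin (k + 1) v (Icc a b) a :=
    (congrFun iteratedDerivWithin_succ' a).symm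
  rw [hz]
  congr 1
  have hfac : ((k + 1).factorial : ℝ) = (k + 1) * (k.factorial : ℝ) := by
    push_cast [Nat.factorial_succ]; ring
  have hne : (k.factorial : ℝ) ≠ 0 := Nat.cast_ne_zero.2 k.factorial_ne_zero
  rw [hfac]
  push_cast
  field_simp

lemma poly_markov (q : ℕ) : ∃ K : ℝ, 0 < K ∧ ∀ (pf : ℝ → Z), IsPolyDegLE Z q pf →
    ∀ a b : ℝ, a < b → ∀ S : ℝ, (∀ t ∈ Icc a b, ‖pf t‖ ≤ S) →
    ∃ pf' : ℝ → Z, Continuous pf' ∧ (∀ t, HasDerivAt pf (pf' t) t) ∧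
      ∀ t ∈ Icc a b, ‖pf' t‖ ≤ K / (b - a) * S := by
  classical
  set u : Fin (q + 1) → ℝ := fun k => (k : ℝ) / (q + 1) with hu
  have hq1 : (0 : ℝ) < (q : ℝ) + 1 := by positivity
  obtain ⟨B, hBW⟩ : ∃ B : Matrix (Fin (q+1)) (Fin (q+1)) ℝ, B * Matrix.vandermonde u = 1 := by
    have hdet : (Matrix.vandermonde u).det ≠ 0 := by
      rw [Matrix.det_vandermonde]
      apply ne_of_gt
      apply Finset.prod_pos
      intro i _
      apply Finset.prod_pos
      intro j hj
      have hij : i < j := Finset.mem_Ioi.1 hj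
      have hcast : (i : ℝ) < (j : ℝ) := by exact_mod_cast hij
      simp only [hu]
      rw [div_sub_div_same]
      exact div_pos (by linarith) hq1
    exact ⟨_, Matrix.nonsing_inv_mul _ (isUnit_iff_ne_zero.2 hdet)⟩
  set K₀ : ℝ := ∑ j : Fin (q + 1), ∑ k : Fin (q + 1), |B j k| with hK₀
  have hK₀nn : 0 ≤ K₀ := by positivity
  refine ⟨((q : ℝ) + 1) ^ 2 * (K₀ + 1), by positivity, ?_⟩
  intro pf hpoly a b hab S hS
  have hτ : (0 : ℝ) < b - a := sub_pos.2 hab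
  have hSnn : 0 ≤ S := le_trans (norm_nonneg _) (hS a (left_mem_Icc.2 hab.le))
  obtain ⟨e, he'⟩ := hpoly.comp_affine a (b - a)
  have he : ∀ t : ℝ, pf (a + (b - a) * t) = ∑ i : Fin (q + 1), t ^ (i : ℕ) • e i := he'
  have hnode : ∀ k : Fin (q + 1), a + (b - a) * u k ∈ Icc a b := by
    intro k
    have h0 : (0 : ℝ) ≤ u k := by positivity
    have h1 : u k ≤ 1 := by
      rw [hu, div_le_one hq1]
      have : (k : ℕ) ≤ q := Fin.is_le k
      exact_mod_cast Nat.le_succ_of_le this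
    constructor
    · nlinarith
    · nlinarith
  have he_node : ∀ j : Fin (q + 1), e j = ∑ k : Fin (q + 1), B j k • pf (a + (b - a) * u k) := by
    intro j
    have hcalc : ∀ k, pf (a + (b - a) * u k) = ∑ i : Fin (q + 1), Matrix.vandermonde u k i • e i := by
      intro k
      rw [he (u k)]
      refine Finset.sum_congr rfl fun i _ => ?_
      simp [Matrix.vandermonde]
    calc e j = ∑ i : Fin (q + 1), ((1 : Matrix (Fin (q+1)) (Fin (q+1)) ℝ) j i) • e i := by
          simp only [Matrix.one_apply]
          simp
      _ = ∑ i : Fin (q + 1), ((B * Matrix.vandermonde u) j i) • e i := by rw [hBW]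
      _ = ∑ i : Fin (q + 1), ∑ k : Fin (q + 1), (B j k * Matrix.vandermonde u k i) • e i := by
          refine Finset.sum_congr rfl fun i _ => ?_
          rw [Matrix.mul_apply, Finset.sum_smul]
      _ = ∑ k : Fin (q + 1), ∑ i : Fin (q + 1), (B j k * Matrix.vandermonde u k i) • e i :=
          Finset.sum_comm
      _ = ∑ k : Fin (q + 1), B j k • pf (a + (b - a) * u k) := by
          refine Finset.sum_congr rfl fun k _ => ?_
          rw [hcalc k, Finset.smul_sum]
          refine Finset.sum_congr rfl fun i _ => ?_
          rw [smul_smul]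
  have he_bound : ∀ j : Fin (q + 1), ‖e j‖ ≤ K₀ * S := by
    intro j
    rw [he_node j]
    calc ‖∑ k : Fin (q + 1), B j k • pf (a + (b - a) * u k)‖
        ≤ ∑ k : Fin (q + 1), ‖B j k • pf (a + (b - a) * u k)‖ := norm_sum_le _ _
      _ ≤ ∑ k : Fin (q + 1), |B j k| * S := by
          refine Finset.sum_le_sum fun k _ => ?_
          rw [norm_smul, Real.norm_eq_abs]
          exact mul_le_mul_of_nonneg_left (hS _ (hnode k)) (abs_nonneg _)
      _ = (∑ k : Fin (q + 1), |B j k|) * S := by rw [Finset.sum_mul]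
      _ ≤ K₀ * S := by
          refine mul_le_mul_of_nonneg_right ?_ hSnn
          exact Finset.single_le_sum (f := fun j => ∑ k : Fin (q+1), |B j k|)
            (fun j _ => by positivity) (Finset.mem_univ j)
  have hrepr : pf = fun t => ∑ i : Fin (q + 1), ((t - a) * (b - a)⁻¹) ^ (i : ℕ) • e i := by
    funext t
    have h2 := he ((t - a) * (b - a)⁻¹)
    have harg : a + (b - a) * ((t - a) * (b - a)⁻¹) = t := by
      field_simp
      ring
    rw [harg] at h2
    exact h2
  refine ⟨fun t => ∑ i : Fin (q + 1),
      (((i : ℕ) : ℝ) * ((t - a) * (b - a)⁻¹) ^ ((i : ℕ) - 1) * (1 * (b - a)⁻¹)) • e i, ?_, ?_, ?_⟩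
  · refine continuous_finset_sum _ fun i _ => Continuous.smul ?_ continuous_const
    exact (continuous_const.mul (((continuous_id.sub continuous_const).mul
      continuous_const).pow _)).mul continuous_const
  · intro t
    rw [hrepr]
    exact HasDerivAt.fun_sum fun i _ =>
      ((((hasDerivAt_id t).sub_const a).mul_const (b - a)⁻¹).pow _).smul_const _
  · intro t ht
    have hta : 0 ≤ t - a := by linarith [ht.1]
    have hx0 : 0 ≤ (t - a) * (b - a)⁻¹ := by positivity
    have hx1 : (t - a) * (b - a)⁻¹ ≤ 1 := by
      rw [← div_eq_mul_inv, div_le_one hτ]; linarith [ht.2]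
    have hterm : ∀ i : Fin (q + 1),
        ‖(((i : ℕ) : ℝ) * ((t - a) * (b - a)⁻¹) ^ ((i : ℕ) - 1) * (1 * (b - a)⁻¹)) • e i‖
          ≤ (((q : ℝ) + 1) * (b - a)⁻¹) * (K₀ * S) := by
      intro i
      rw [norm_smul, Real.norm_eq_abs]
      have hi : |((i : ℕ) : ℝ)| ≤ (q : ℝ) + 1 := by
        rw [abs_of_nonneg (by positivity)]
        have : (i : ℕ) ≤ q := Fin.is_le i
        exact_mod_cast Nat.le_succ_of_le this
      have hpow : |((t - a) * (b - a)⁻¹) ^ ((i : ℕ) - 1)| ≤ 1 := by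
        rw [abs_pow]
        exact pow_le_one₀ (abs_nonneg _) (by rw [abs_of_nonneg hx0]; exact hx1)
      have h1 : |(((i : ℕ) : ℝ) * ((t - a) * (b - a)⁻¹) ^ ((i : ℕ) - 1) * (1 * (b - a)⁻¹))|
          ≤ ((q : ℝ) + 1) * (b - a)⁻¹ := by
        rw [abs_mul, abs_mul, one_mul, abs_of_nonneg (le_of_lt (inv_pos.2 hτ))]
        calc |((i : ℕ) : ℝ)| * |((t - a) * (b - a)⁻¹) ^ ((i : ℕ) - 1)| * (b - a)⁻¹
            ≤ (((q : ℝ) + 1) * 1) * (b - a)⁻¹ := by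
              apply mul_le_mul_of_nonneg_right _ (le_of_lt (inv_pos.2 hτ))
              exact mul_le_mul hi hpow (abs_nonneg _) (by positivity)
          _ = ((q : ℝ) + 1) * (b - a)⁻¹ := by ring
      calc |(((i : ℕ) : ℝ) * ((t - a) * (b - a)⁻¹) ^ ((i : ℕ) - 1) * (1 * (b - a)⁻¹))| * ‖e i‖
          ≤ (((q : ℝ) + 1) * (b - a)⁻¹) * ‖e i‖ :=
            mul_le_mul_of_nonneg_right h1 (norm_nonneg _)
        _ ≤ (((q : ℝ) + 1) * (b - a)⁻¹) * (K₀ * S) :=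
            mul_le_mul_of_nonneg_left (he_bound i) (by positivity)
    calc ‖∑ i : Fin (q + 1),
          (((i : ℕ) : ℝ) * ((t - a) * (b - a)⁻¹) ^ ((i : ℕ) - 1) * (1 * (b - a)⁻¹)) • e i‖
        ≤ ∑ i : Fin (q + 1), ‖(((i : ℕ) : ℝ) * ((t - a) * (b - a)⁻¹) ^ ((i : ℕ) - 1)
            * (1 * (b - a)⁻¹)) • e i‖ := norm_sum_le _ _
      _ ≤ ∑ _i : Fin (q + 1), (((q : ℝ) + 1) * (b - a)⁻¹) * (K₀ * S) :=
          Finset.sum_le_sum fun i _ => hterm i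
      _ = ((q : ℝ) + 1) * ((((q : ℝ) + 1) * (b - a)⁻¹) * (K₀ * S)) := by
          rw [Finset.sum_const, Finset.card_univ, Fintype.card_fin, nsmul_eq_mul]
          push_cast
          ring
      _ ≤ ((q : ℝ) + 1) ^ 2 * (K₀ + 1) / (b - a) * S := by
          rw [div_eq_mul_inv]
          have hinv : 0 < (b - a)⁻¹ := inv_pos.2 hτ
          nlinarith [mul_nonneg hK₀nn hSnn, mul_pos (mul_pos hq1 hq1) hinv,
            mul_nonneg (mul_nonneg hq1.le hq1.le) hinv.le]

lemma bound_on_Icc_of_ae {a b : ℝ} (hab : a < b) {f : ℝ → Z} (hf : Continuous f) {S : ℝ}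
    (h : ∀ᵐ t ∂(volume.restrict (Ioo a b)), ‖f t‖ ≤ S) : ∀ t ∈ Icc a b, ‖f t‖ ≤ S := by
  intro t₀ ht₀
  by_contra hcon
  push_neg at hcon
  have hU : IsOpen {x : ℝ | S < ‖f x‖} := isOpen_lt continuous_const hf.norm
  have hclos : t₀ ∈ closure (Ioo a b) := by rw [closure_Ioo hab.ne]; exact ht₀
  have hne : ({x : ℝ | S < ‖f x‖} ∩ Ioo a b).Nonempty :=
    mem_closure_iff.1 hclos _ hU hcon
  have hpos : 0 < volume ({x : ℝ | S < ‖f x‖} ∩ Ioo a b) :=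
    (hU.inter isOpen_Ioo).measure_pos volume hne
  have h2 : ∀ᵐ x ∂(volume : Measure ℝ), x ∈ Ioo a b → ‖f x‖ ≤ S :=
    (ae_restrict_iff' measurableSet_Ioo).1 h
  have h3 : volume {x : ℝ | ¬ (x ∈ Ioo a b → ‖f x‖ ≤ S)} = 0 := ae_iff.1 h2
  have hsub : {x : ℝ | S < ‖f x‖} ∩ Ioo a b ⊆ {x : ℝ | ¬ (x ∈ Ioo a b → ‖f x‖ ≤ S)} := by
    intro x hx
    intro himp
    exact absurd (himp hx.2) (not_le.2 hx.1)
  exact absurd (measure_mono_null hsub h3) (ne_of_gt hpos)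

lemma eLpNorm_top_le_of_bound {a b : ℝ} {f : ℝ → Z} {S : ℝ}
    (h : ∀ t ∈ Ioo a b, ‖f t‖ ≤ S) :
    eLpNorm f ⊤ (volume.restrict (Ioo a b)) ≤ ENNReal.ofReal S := by
  rw [eLpNorm_exponent_top]
  exact eLpNormEssSup_le_of_ae_bound ((ae_restrict_iff' measurableSet_Ioo).2 (ae_of_all _ h))

lemma ae_bound_of_eLpNorm_top {μ : Measure ℝ} {f : ℝ → Z} {S : ℝ} (hS : 0 ≤ S)
    (h : eLpNorm f ⊤ μ ≤ ENNReal.ofReal S) : ∀ᵐ t ∂μ, ‖f t‖ ≤ S := by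
  rw [eLpNorm_exponent_top] at h
  filter_upwards [enorm_ae_le_eLpNormEssSup f μ] with t ht
  have h2 : ENNReal.ofReal ‖f t‖ ≤ ENNReal.ofReal S := by
    rw [ofReal_norm]
    exact le_trans ht h
  exact (ENNReal.ofReal_le_ofReal_iff hS).1 h2

lemma eLpNorm_one_eq_integral {a b : ℝ} (hab : a < b) {f : ℝ → Z}
    (hf : ContinuousOn f (Icc a b)) :
    ENNReal.ofReal (∫ u in a..b, ‖f u‖) = eLpNorm f 1 (volume.restrict (Ioo a b)) := by
  have hint : Integrable (fun u => ‖f u‖) (volume.restrict (Ioo a b)) :=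
    (hf.norm.integrableOn_Icc).mono_set Ioo_subset_Icc_self
  rw [eLpNorm_one_eq_lintegral_enorm, intervalIntegral.integral_of_le hab.le,
    MeasureTheory.integral_Ioc_eq_integral_Ioo,
    ofReal_integral_eq_lintegral_ofReal hint (ae_of_all _ fun x => norm_nonneg _)]
  exact lintegral_congr fun x => ofReal_norm _

lemma restrict_Ioo_univ {a b : ℝ} :
    (volume.restrict (Ioo a b)) univ = ENNReal.ofReal (b - a) := by
  rw [Measure.restrict_apply_univ]; exact Real.volume_Ioo

lemma term_bound {a b : ℝ} (hab : a < b) {r : ℝ≥0∞} {f V : ℝ → Z}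
    (hfm : AEStronglyMeasurable f (volume.restrict (Ioo a b)))
    {c L : ℝ} (hc : 0 ≤ c)
    (hbound : ∀ t ∈ Ioo a b, ‖f t‖ ≤ c * L)
    (hL : ENNReal.ofReal L ≤ eLpNorm V r (volume.restrict (Ioo a b)) *
      ENNReal.ofReal (b - a) ^ (1 - 1 / r.toReal)) :
    eLpNorm f r (volume.restrict (Ioo a b)) ≤ ENNReal.ofReal (c * (b - a)) *
      eLpNorm V r (volume.restrict (Ioo a b)) := by
  set μ := volume.restrict (Ioo a b) with hμ
  set T := ENNReal.ofReal (b - a) with hT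
  set N := eLpNorm V r μ with hN
  have hT0 : T ≠ 0 := (ENNReal.ofReal_pos.2 (sub_pos.2 hab)).ne'
  have hTtop : T ≠ ⊤ := ENNReal.ofReal_ne_top
  have hTsplit : T ^ (1 - 1 / r.toReal) * T ^ (1 / r.toReal) = T := by
    rw [← ENNReal.rpow_add _ _ hT0 hTtop]
    norm_num
  calc eLpNorm f r μ
      ≤ eLpNorm f ⊤ μ * T ^ (1 / r.toReal) := by
        have h := eLpNorm_le_eLpNorm_mul_rpow_measure_univ (le_top (a := r)) hfm
        rw [restrict_Ioo_univ, ← hT] at h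
        simpa [ENNReal.toReal_top] using h
    _ ≤ ENNReal.ofReal (c * L) * T ^ (1 / r.toReal) :=
        mul_le_mul_left (eLpNorm_top_le_of_bound hbound) _
    _ = ENNReal.ofReal c * ENNReal.ofReal L * T ^ (1 / r.toReal) := by
        rw [ENNReal.ofReal_mul hc]
    _ ≤ ENNReal.ofReal c * (N * T ^ (1 - 1 / r.toReal)) * T ^ (1 / r.toReal) := by
        gcongr
    _ = ENNReal.ofReal c * N * (T ^ (1 - 1 / r.toReal) * T ^ (1 / r.toReal)) := by ring
    _ = ENNReal.ofReal c * N * T := by rw [hTsplit]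
    _ = ENNReal.ofReal (c * (b - a)) * N := by
        rw [ENNReal.ofReal_mul hc]; ring

section WithComplete
variable [CompleteSpace Z]

lemma ftc_bound {a b : ℝ} (hab : a < b) {w A' : ℝ → Z}
    (hw0 : w a = 0) (hwc : ContinuousOn w (Icc a b)) (hA'c : ContinuousOn A' (Icc a b))
    (hder : ∀ x ∈ Ioo a b, HasDerivAt w (A' x) x) :
    ∀ t ∈ Icc a b, ‖w t‖ ≤ ∫ u in a..b, ‖A' u‖ := by
  intro t ht
  have hat : a ≤ t := ht.1
  have huIcc : uIcc a t = Icc a t := uIcc_of_le hat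
  have hsub : Icc a t ⊆ Icc a b := Icc_subset_Icc le_rfl ht.2
  have hint : IntervalIntegrable A' volume a t :=
    ContinuousOn.intervalIntegrable (by rw [huIcc]; exact hA'c.mono hsub)
  have heq : ∫ u in a..t, A' u = w t - w a :=
    integral_eq_sub_of_hasDeriv_right_of_le hat (hwc.mono hsub)
      (fun x hx => (hder x ⟨hx.1, lt_of_lt_of_le hx.2 ht.2⟩).hasDerivWithinAt) hint
  rw [hw0, sub_zero] at heq
  calc ‖w t‖ = ‖∫ u in a..t, A' u‖ := by rw [heq]
    _ ≤ ∫ u in a..t, ‖A' u‖ := norm_integral_le_integral_norm hat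
    _ ≤ ∫ u in a..b, ‖A' u‖ := by
        apply integral_mono_interval le_rfl hat ht.2
          (Filter.Eventually.of_forall fun x => norm_nonneg _)
        exact ContinuousOn.intervalIntegrable (by rw [uIcc_of_le hab.le]; exact hA'c.norm)

lemma taylor_rem_L1 {a b : ℝ} (hab : a < b) :
    ∀ (n : ℕ) (v : ℝ → Z), ContDiffOn ℝ (n + 1 : ℕ) v (Icc a b) →
    ∀ t ∈ Icc a b, ‖v t - taylorWithinEval v n (Icc a b) a t‖
      ≤ (b - a) ^ n * ∫ u in a..b, ‖iteratedDerivWithin (n + 1) v (Icc a b) u‖ := by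
  have hudo := uniqueDiffOn_Icc hab
  intro n
  induction n with
  | zero =>
    intro v hv t ht
    have hgc : ContinuousOn (derivWithin v (Icc a b)) (Icc a b) :=
      hv.continuousOn_derivWithin hudo (by exact_mod_cast Nat.succ_le_succ (Nat.zero_le _))
    have hder : ∀ x ∈ Ioo a b, HasDerivAt (fun y => v y - v a)
        (derivWithin v (Icc a b) x) x := by
      intro x hx
      have hmem : Icc a b ∈ nhds x := Icc_mem_nhds hx.1 hx.2
      have hdiff : DifferentiableAt ℝ v x :=
        (hv.differentiableOn (by simp)).differentiableAt hmem
      rw [derivWithin_of_mem_nhds hmem]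
      exact hdiff.hasDerivAt.sub_const _
    have key := ftc_bound hab (w := fun x => v x - v a) (by simp)
      (hv.continuousOn.sub continuousOn_const) hgc hder t ht
    rw [taylor_within_zero_eval]
    refine key.trans ?_
    rw [pow_zero, one_mul]
    apply le_of_eq
    apply integral_congr
    intro u hu
    rw [uIcc_of_le hab.le] at hu
    show ‖derivWithin v (Icc a b) u‖ = ‖iteratedDerivWithin (0 + 1) v (Icc a b) u‖
    rw [iteratedDerivWithin_one]
  | succ n IH =>
    intro v hv t ht
    have hg : ContDiffOn ℝ (n + 1 : ℕ) (derivWithin v (Icc a b)) (Icc a b) :=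
      hv.derivWithin hudo (by norm_cast)
    set g := derivWithin v (Icc a b) with hgdef
    set A' := fun x => g x - taylorWithinEval g n (Icc a b) a x with hA'def
    have hA'c : ContinuousOn A' (Icc a b) :=
      hg.continuousOn.sub (taylor_continuous' g n _ a).continuousOn
    have hw0 : v a - taylorWithinEval v (n + 1) (Icc a b) a a = 0 := by
      rw [taylorWithinEval_self]; simp
    have hwc : ContinuousOn (fun x => v x - taylorWithinEval v (n + 1) (Icc a b) a x)
        (Icc a b) := hv.continuousOn.sub (taylor_continuous' v (n + 1) _ a).continuousOn
    have hder : ∀ x ∈ Ioo a b,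
        HasDerivAt (fun y => v y - taylorWithinEval v (n + 1) (Icc a b) a y) (A' x) x := by
      intro x hx
      have hmem : Icc a b ∈ nhds x := Icc_mem_nhds hx.1 hx.2
      have hdiff : DifferentiableAt ℝ v x :=
        (hv.differentiableOn (by simp)).differentiableAt hmem
      have h1 : HasDerivAt v (g x) x := by
        rw [hgdef, derivWithin_of_mem_nhds hmem]
        exact hdiff.hasDerivAt
      exact h1.sub (taylor_hasDerivAt hab v n x)
    have key := ftc_bound hab hw0 hwc hA'c hder t ht
    refine key.trans ?_
    have hLcong : (∫ u in a..b, ‖iteratedDerivWithin (n + 1) g (Icc a b) u‖)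
        = ∫ u in a..b, ‖iteratedDerivWithin (n + 1 + 1) v (Icc a b) u‖ := by
      apply integral_congr
      intro u hu
      rw [uIcc_of_le hab.le] at hu
      show ‖iteratedDerivWithin (n + 1) g (Icc a b) u‖
        = ‖iteratedDerivWithin (n + 1 + 1) v (Icc a b) u‖
      conv_rhs => rw [iteratedDerivWithin_succ']
    have hbound : ∀ u ∈ Icc a b, ‖A' u‖
        ≤ (b - a) ^ n * ∫ x in a..b, ‖iteratedDerivWithin (n + 1 + 1) v (Icc a b) x‖ := by
      intro u hu
      have := IH g hg u hu
      rwa [hLcong] at this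
    calc ∫ u in a..b, ‖A' u‖
        ≤ ∫ _u in a..b, ((b - a) ^ n
            * ∫ x in a..b, ‖iteratedDerivWithin (n + 1 + 1) v (Icc a b) x‖) := by
          apply integral_mono_on hab.le
            (ContinuousOn.intervalIntegrable (by rw [uIcc_of_le hab.le]; exact hA'c.norm))
            intervalIntegrable_const hbound
      _ = (b - a) ^ (n + 1) * ∫ x in a..b, ‖iteratedDerivWithin (n + 1 + 1) v (Icc a b) x‖ := by
          rw [_root_.intervalIntegral.integral_const, smul_eq_mul]; ring

end WithComplete

end Helpers

/-- **Derivative estimate for a generic projector.** Any linear projection `P` onto polynomials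
of degree at most `q` in time that reproduces such polynomials on `[a,b]` and is stable in the
`L^∞((a,b);Z)` norm with constant `C_P` satisfies, for every `s`-times continuously
differentiable `v` and every `r ∈ [1,∞]`,
`‖(v − Pv)'‖_{L^r((a,b);Z)} ≤ C τ^{s−1} ‖v^{(s)}‖_{L^r((a,b);Z)}`,
with a constant `C` depending only on `q`, `s`, and `C_P`. -/
theorem generic_projector_deriv_estimate (q s : ℕ) (hs1 : 1 ≤ s) (hs2 : s ≤ q + 1)
    (C_P : ℝ) (hCP : 0 < C_P)
    (Z : Type*) [NormedAddCommGroup Z] [NormedSpace ℝ Z] [CompleteSpace Z] :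
    ∃ C : ℝ, 0 < C ∧
      ∀ (a b τ : ℝ), a < b → τ = b - a →
        ∀ r : ℝ≥0∞, 1 ≤ r →
          ∀ P : (ℝ → Z) → (ℝ → Z),
            (∀ f g : ℝ → Z, ContinuousOn f (Icc a b) → ContinuousOn g (Icc a b) →
              ∀ t ∈ Icc a b, P (f + g) t = P f t + P g t) →
            (∀ (c : ℝ) (f : ℝ → Z), ContinuousOn f (Icc a b) →
              ∀ t ∈ Icc a b, P (c • f) t = c • P f t) →
            (∀ f : ℝ → Z, ContinuousOn f (Icc a b) →
              ∃ pf : ℝ → Z, IsPolyDegLE Z q pf ∧ ∀ t ∈ Icc a b, P f t = pf t) →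
            (∀ pf : ℝ → Z, IsPolyDegLE Z q pf → ∀ t ∈ Icc a b, P pf t = pf t) →
            (∀ g : ℝ → Z, ContinuousOn g (Icc a b) →
              eLpNorm (P g) ⊤ (volume.restrict (Ioo a b)) ≤
                ENNReal.ofReal C_P * eLpNorm g ⊤ (volume.restrict (Ioo a b))) →
            ∀ v : ℝ → Z, ContDiffOn ℝ s v (Icc a b) →
              eLpNorm (derivWithin (fun u => v u - P v u) (Icc a b)) r
                  (volume.restrict (Ioo a b)) ≤
                ENNReal.ofReal (C * τ ^ (s - 1)) *
                  eLpNorm (iteratedDerivWithin s v (Icc a b)) r (volume.restrict (Ioo a b)) := by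
  obtain ⟨K, hK, hMarkov⟩ := poly_markov (Z := Z) q
  refine ⟨1 + K * C_P, by positivity, ?_⟩
  intro a b τ hab hτdef r hr P h_add h_smul h_poly h_repro h_stab v hv
  subst hτdef
  obtain ⟨m, rfl⟩ : ∃ m : ℕ, s = m + 1 := ⟨s - 1, (Nat.succ_pred_eq_of_pos hs1).symm⟩
  have hmq : m ≤ q := by omega
  have hτ : (0 : ℝ) < b - a := sub_pos.2 hab
  have hudo := uniqueDiffOn_Icc hab
  set μ := volume.restrict (Ioo a b) with hμdef
  set I := Icc a b with hIdef
  -- basic objects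
  set p : ℝ → Z := fun x => taylorWithinEval v m I a x with hpdef
  set w : ℝ → Z := fun x => v x - p x with hwdef
  set g : ℝ → Z := derivWithin v I with hgdef
  set V : ℝ → Z := iteratedDerivWithin (m + 1) v I with hVdef
  set L : ℝ := ∫ u in a..b, ‖V u‖ with hLdef
  set N := eLpNorm V r μ with hNdef
  have hVcont : ContinuousOn V I :=
    hv.continuousOn_iteratedDerivWithin (le_refl _) hudo
  have hgcont : ContinuousOn g I :=
    hv.continuousOn_derivWithin hudo (by exact_mod_cast Nat.succ_le_succ (Nat.zero_le _))
  have hpcont : Continuous p := taylor_continuous' v m I a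
  have hwcont : ContinuousOn w I := hv.continuousOn.sub hpcont.continuousOn
  have hppoly : IsPolyDegLE Z q p := taylor_isPolyDegLE v m hmq I a
  have hLnn : 0 ≤ L := by
    rw [hLdef]
    apply intervalIntegral.integral_nonneg hab.le
    intro u _; exact norm_nonneg _
  have hwbound : ∀ t ∈ I, ‖w t‖ ≤ (b - a) ^ m * L := taylor_rem_L1 hab m v hv
  -- measurability
  have hVmeas : AEStronglyMeasurable V μ :=
    (hVcont.mono Ioo_subset_Icc_self).aestronglyMeasurable measurableSet_Ioo
  -- the L¹ norm comparison
  have hL : ENNReal.ofReal L ≤ N * ENNReal.ofReal (b - a) ^ (1 - 1 / r.toReal) := by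
    rw [hLdef, eLpNorm_one_eq_integral hab hVcont]
    have h := eLpNorm_le_eLpNorm_mul_rpow_measure_univ (p := 1) hr hVmeas
    rw [restrict_Ioo_univ] at h
    simpa [ENNReal.toReal_one] using h
  -- the interpolant of w
  obtain ⟨pw, hpwpoly, hpweq⟩ := h_poly w hwcont
  set S : ℝ := C_P * ((b - a) ^ m * L) with hSdef
  have hSnn : 0 ≤ S := by positivity
  have hPwtop : eLpNorm (P w) ⊤ μ ≤ ENNReal.ofReal S := by
    refine (h_stab w hwcont).trans ?_
    rw [hSdef, ENNReal.ofReal_mul hCP.le]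
    exact mul_le_mul_right
      (eLpNorm_top_le_of_bound (fun t ht => hwbound t (Ioo_subset_Icc_self ht))) _
  have hpwae : ∀ᵐ t ∂μ, ‖pw t‖ ≤ S := by
    filter_upwards [ae_bound_of_eLpNorm_top hSnn hPwtop,
      ae_restrict_mem measurableSet_Ioo] with t h1 h2
    rw [← hpweq t (Ioo_subset_Icc_self h2)]
    exact h1
  have hpwbound : ∀ t ∈ I, ‖pw t‖ ≤ S := bound_on_Icc_of_ae hab hpwpoly.continuous hpwae
  obtain ⟨pw', hpw'c, hpw'd, hpw'bound⟩ := hMarkov pw hpwpoly a b hab S hpwbound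
  -- Term A : the derivative of w
  obtain ⟨A, hAcont, hAder, hAbound⟩ :
      ∃ A : ℝ → Z, ContinuousOn A I ∧ (∀ t ∈ Ioo a b, HasDerivAt w (A t) t) ∧
        eLpNorm A r μ ≤ ENNReal.ofReal ((b - a) ^ m) * N := by
    cases m with
    | zero =>
      refine ⟨g, hgcont, ?_, ?_⟩
      · intro t ht
        have hmem : I ∈ nhds t := Icc_mem_nhds ht.1 ht.2
        have hdiff : DifferentiableAt ℝ v t :=
          (hv.differentiableOn (by simp)
            ).differentiableAt hmem
        have hw' : w = fun x => v x - v a := by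
          funext x
          rw [hwdef]
          simp only [hpdef, taylor_within_zero_eval]
        rw [hw', hgdef, derivWithin_of_mem_nhds hmem]
        exact hdiff.hasDerivAt.sub_const _
      · have : eLpNorm g r μ = N := by
          apply eLpNorm_congr_ae
          refine (ae_restrict_iff' measurableSet_Ioo).2 (ae_of_all _ fun t ht => ?_)
          rw [hgdef, hVdef, iteratedDerivWithin_one]
        rw [this]
        simp
    | succ k =>
      have hg : ContDiffOn ℝ (k + 1 : ℕ) g I := hv.derivWithin hudo (by norm_cast)
      refine ⟨fun t => g t - taylorWithinEval g k I a t,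
        hgcont.sub (taylor_continuous' g k I a).continuousOn, ?_, ?_⟩
      · intro t ht
        have hmem : I ∈ nhds t := Icc_mem_nhds ht.1 ht.2
        have hdiff : DifferentiableAt ℝ v t :=
          (hv.differentiableOn (by simp)
            ).differentiableAt hmem
        have h1 : HasDerivAt v (g t) t := by
          rw [hgdef, derivWithin_of_mem_nhds hmem]
          exact hdiff.hasDerivAt
        exact h1.sub (taylor_hasDerivAt hab v k t)
      · have hptwise : ∀ t ∈ Ioo a b, ‖g t - taylorWithinEval g k I a t‖
            ≤ (b - a) ^ k * L := by
          intro t ht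
          have h2 := taylor_rem_L1 hab k g hg t (Ioo_subset_Icc_self ht)
          have hcong : (∫ u in a..b, ‖iteratedDerivWithin (k + 1) g I u‖) = L := by
            rw [hLdef]
            apply intervalIntegral.integral_congr
            intro u hu
            rw [uIcc_of_le hab.le] at hu
            show ‖iteratedDerivWithin (k + 1) g I u‖ = ‖V u‖
            rw [hVdef, hgdef]
            conv_rhs => rw [iteratedDerivWithin_succ']
          rwa [hcong] at h2
        have hfm : AEStronglyMeasurable (fun t => g t - taylorWithinEval g k I a t) μ :=
          ((hgcont.sub (taylor_continuous' g k I a).continuousOn).mono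
            Ioo_subset_Icc_self).aestronglyMeasurable measurableSet_Ioo
        have hterm := term_bound hab hfm (by positivity : (0:ℝ) ≤ (b - a) ^ k) hptwise hL
        refine hterm.trans (le_of_eq ?_)
        rw [← pow_succ]
  -- Term B : the derivative of the interpolant
  have hpw'meas : AEStronglyMeasurable pw' μ := hpw'c.aestronglyMeasurable
  have hBptwise : ∀ t ∈ Ioo a b, ‖pw' t‖ ≤ (K / (b - a) * C_P * (b - a) ^ m) * L := by
    intro t ht
    refine (hpw'bound t (Ioo_subset_Icc_self ht)).trans (le_of_eq ?_)
    rw [hSdef]; ring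
  have hB := term_bound hab hpw'meas
    (by positivity : (0:ℝ) ≤ K / (b - a) * C_P * (b - a) ^ m) hBptwise hL
  have hcsimp : K / (b - a) * C_P * (b - a) ^ m * (b - a) = K * C_P * (b - a) ^ m := by
    field_simp
  rw [hcsimp] at hB
  -- pointwise identity for the derivative
  have hvdecomp : v = w + p := by
    funext x
    show v x = w x + p x
    rw [hwdef]
    simp
  have hEq : EqOn (fun u => v u - P v u) (fun u => w u - pw u) I := by
    intro u hu
    have h1 : P v u = pw u + p u := by
      conv_lhs => rw [hvdecomp]
      rw [h_add w p hwcont hpcont.continuousOn u hu, hpweq u hu, h_repro p hppoly u hu]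
    show v u - P v u = w u - pw u
    rw [h1, hwdef]
    exact sub_add_eq_sub_sub_swap _ _ _
  have hD : ∀ t ∈ Ioo a b, derivWithin (fun u => v u - P v u) I t = A t - pw' t := by
    intro t ht
    have hmem : I ∈ nhds t := Icc_mem_nhds ht.1 ht.2
    rw [derivWithin_congr hEq (hEq (Ioo_subset_Icc_self ht)),
      derivWithin_of_mem_nhds hmem]
    exact ((hAder t ht).sub (hpw'd t)).deriv
  have hcongr : eLpNorm (derivWithin (fun u => v u - P v u) I) r μ
      = eLpNorm (fun t => A t - pw' t) r μ :=
    eLpNorm_congr_ae ((ae_restrict_iff' measurableSet_Ioo).2 (ae_of_all _ hD))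
  rw [hcongr]
  have hAmeas : AEStronglyMeasurable A μ :=
    (hAcont.mono Ioo_subset_Icc_self).aestronglyMeasurable measurableSet_Ioo
  have htri : eLpNorm (fun t => A t - pw' t) r μ ≤ eLpNorm A r μ + eLpNorm pw' r μ := by
    have h := eLpNorm_sub_le (f := A) (g := pw') hAmeas hpw'meas hr
    simpa [Pi.sub_def] using h
  refine htri.trans ((add_le_add hAbound hB).trans (le_of_eq ?_))
  rw [← add_mul, ← ENNReal.ofReal_add (by positivity) (by positivity)]
  have hms : m + 1 - 1 = m := by omega
  rw [hms]
  congr 2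
  ring
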